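/- Let σ be a permutation of X = {x_1 < ... < x_n} with triangulation T = φ(σ), and let t_i denote the third vertex of the face of T containing edge {x_i, x_{i+1}}. If the letters x_i, x_{i+1}, ..., x_j (with j ≥ i+2) appear in increasing order when σ is read left to right, then t_{j-1} ≤ t_{j-2} ≤ ... ≤ t_i < x_i. -/

import Mathlib

open scoped Classical

/-- `d` is a diagonal of the convex `(n+2)`-gon with vertices `0,…,n+1`
(in clockwise increasing order): it joins two nonadjacent vertices. -/
def IsDiagonal (n : ℕ) (d : ℕ × ℕ) : Prop :=
  d.1 < d.2 ∧ d.2 ≤ n + 1 ∧ d.2 ≠ d.1 + 1 ∧ ¬(d.1 = 0 ∧ d.2 = n + 1)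

/-- Two diagonals of a convex polygon cross. -/
def Crosses (d e : ℕ × ℕ) : Prop :=
  (d.1 < e.1 ∧ e.1 < d.2 ∧ d.2 < e.2) ∨ (e.1 < d.1 ∧ d.1 < e.2 ∧ e.2 < d.2)

/-- A triangulation of the convex `(n+2)`-gon: `n-1` pairwise noncrossing diagonals. -/
def IsTriangulation (n : ℕ) (D : Finset (ℕ × ℕ)) : Prop :=
  (∀ d ∈ D, IsDiagonal n d) ∧ (∀ d ∈ D, ∀ e ∈ D, ¬ Crosses d e) ∧ D.card = n - 1

/-- `{a,b}` (with `a<b`) is an edge of the triangulation `D`: a polygon side or a diagonal. -/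
def IsEdge (n : ℕ) (D : Finset (ℕ × ℕ)) (a b : ℕ) : Prop :=
  a < b ∧ b ≤ n + 1 ∧ (b = a + 1 ∨ (a = 0 ∧ b = n + 1) ∨ (a, b) ∈ D)

/-- `{a,b,c}` (with `a<b<c`) is a (triangular) face of the triangulation `D`. -/
def IsFace (n : ℕ) (D : Finset (ℕ × ℕ)) (a b c : ℕ) : Prop :=
  a < b ∧ b < c ∧ IsEdge n D a b ∧ IsEdge n D b c ∧ IsEdge n D a c

/-- An ear of a triangulation: a vertex incident to no diagonal. -/
def IsEar (n : ℕ) (D : Finset (ℕ × ℕ)) (v : ℕ) : Prop :=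
  v ≤ n + 1 ∧ ∀ d ∈ D, d.1 ≠ v ∧ d.2 ≠ v

/-- Degree of a vertex: number of edges (polygon sides and diagonals) incident to it. -/
noncomputable def degreeOf (n : ℕ) (D : Finset (ℕ × ℕ)) (v : ℕ) : ℕ :=
  ((Finset.range (n + 2)).filter (fun w => w ≠ v ∧ IsEdge n D (min v w) (max v w))).card

/-- The set of faces of a triangulation, as increasing triples. -/
noncomputable def facesSet (n : ℕ) (D : Finset (ℕ × ℕ)) : Finset (ℕ × ℕ × ℕ) :=
  (Finset.range (n + 2) ×ˢ Finset.range (n + 2) ×ˢ Finset.range (n + 2)).filter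
    (fun t => IsFace n D t.1 t.2.1 t.2.2)

/-- Predecessor of `v` in the vertex set `Y`. -/
def predIn (Y : Finset ℕ) (v : ℕ) : ℕ := WithBot.unbotD 0 (Y.filter (· < v)).max
/-- Successor of `v` in the vertex set `Y`. -/
def succIn (Y : Finset ℕ) (v : ℕ) : ℕ := WithTop.untopD 0 (Y.filter (v < ·)).min

/-- The iterative neighbor-joining construction: for each successive letter,
join its two current neighbors by a diagonal and delete the letter's vertex. -/
def phiAux : List ℕ → Finset ℕ → Finset (ℕ × ℕ)
  | [], _ => ∅
  | [_], _ => ∅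
  | v :: rest, Y => insert (predIn Y v, succIn Y v) (phiAux rest (Y.erase v))

/-- The map `φ` from permutations (standard words, letters `1,…,n`) to
triangulations of the `(n+2)`-gon with vertices `0,…,n+1`. -/
def phiT (n : ℕ) (l : List ℕ) : Finset (ℕ × ℕ) := phiAux l (Finset.range (n + 2))

/-- `t` is the third vertex of a face of `D` containing the polygon side `{i, i+1}`. -/
def FaceOnEdge (n : ℕ) (D : Finset (ℕ × ℕ)) (i t : ℕ) : Prop :=
  (t < i ∧ IsFace n D t i (i + 1)) ∨ (i + 1 < t ∧ IsFace n D i (i + 1) t)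

/-- `D` and `D'` differ by one diagonal flip, in the quadrilateral `a<b<c<d`. -/
def FlipAdj (n : ℕ) (D D' : Finset (ℕ × ℕ)) : Prop :=
  ∃ a b c d : ℕ, a < b ∧ b < c ∧ c < d ∧
    ((IsFace n D a b d ∧ IsFace n D b c d ∧ D' = insert (a, c) (D.erase (b, d))) ∨
     (IsFace n D a b c ∧ IsFace n D a c d ∧ D' = insert (b, d) (D.erase (a, c))))

/-- Sylvester adjacency: `u x z u' y u'' ~ u z x u' y u''` with `x ≤ y < z`. -/
def SylvAdj (w1 w2 : List ℕ) : Prop :=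
  ∃ (u u' u'' : List ℕ) (x y z : ℕ), x ≤ y ∧ y < z ∧
    w1 = u ++ x :: z :: (u' ++ y :: u'') ∧ w2 = u ++ z :: x :: (u' ++ y :: u'')

/-- Sylvester congruence: the equivalence relation generated by sylvester adjacency. -/
def SylvCong : List ℕ → List ℕ → Prop := Relation.EqvGen SylvAdj

/-- Standardization of a word: replace the occurrences of the smallest letter,
left to right, by `1, 2, …`, then continue with the next letter, etc. -/
def stdW (w : List ℕ) : List ℕ :=
  (List.range w.length).map (fun i =>
    (((List.range w.length).filter (fun j =>
      w.getD j 0 < w.getD i 0 ∨ (w.getD j 0 = w.getD i 0 ∧ j < i))).length) + 1)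

/-- Partial sums of an evaluation `μ`. -/
def Msum (μ : ℕ → ℕ) (s : ℕ) : ℕ := ∑ t ∈ Finset.range s, μ t

/-- The color (block index) of the vertex `i` for the increasing coloring `ε_μ`. -/
noncomputable def colOf (μ : ℕ → ℕ) (p i : ℕ) : ℕ :=
  ((Finset.range p).filter (fun s => Msum μ (s + 1) < i)).card

/-- `D`, colored by the increasing coloring `ε_μ`, is a simple colored triangulation. -/
def SimpleFor (n p : ℕ) (μ : ℕ → ℕ) (D : Finset (ℕ × ℕ)) : Prop :=
  IsTriangulation n D ∧
  (∀ d ∈ D, 1 ≤ d.1 → d.2 ≤ n → colOf μ p d.1 ≠ colOf μ p d.2) ∧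
  (∀ i t, 1 ≤ i → i + 1 ≤ n → colOf μ p i = colOf μ p (i + 1) →
    FaceOnEdge n D i t → t < i)

/-- Switched flip: a diagonal flip (preserving vertex colors) whose two adjacent
faces (with middle vertices `b` and `c`) have different colors. -/
def SwFlipAdj (n p : ℕ) (μ : ℕ → ℕ) (D D' : Finset (ℕ × ℕ)) : Prop :=
  ∃ a b c d : ℕ, a < b ∧ b < c ∧ c < d ∧ colOf μ p b ≠ colOf μ p c ∧
    ((IsFace n D a b d ∧ IsFace n D b c d ∧ D' = insert (a, c) (D.erase (b, d))) ∨
     (IsFace n D a b c ∧ IsFace n D a c d ∧ D' = insert (b, d) (D.erase (a, c))))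
lemma predIn_spec {Y : Finset ℕ} {v : ℕ} (h0 : 0 ∈ Y) (hv : 0 < v) :
    predIn Y v ∈ Y ∧ predIn Y v < v ∧ ∀ w ∈ Y, w < v → w ≤ predIn Y v := by
  classical
  have hne : (Y.filter (· < v)).Nonempty := ⟨0, by simp [h0, hv]⟩
  obtain ⟨m, hm⟩ := Finset.max_of_nonempty hne
  have hp : predIn Y v = m := by simp [predIn, hm]
  have hmem := Finset.mem_of_max hm
  simp only [Finset.mem_filter] at hmem
  refine ⟨hp ▸ hmem.1, hp ▸ hmem.2, ?_⟩
  intro w hw hwv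
  have h := Finset.le_max (s := Y.filter (· < v)) (Finset.mem_filter.mpr ⟨hw, hwv⟩)
  rw [hm] at h
  rw [hp]
  exact_mod_cast h

lemma succIn_spec {Y : Finset ℕ} {M v : ℕ} (hM : M ∈ Y) (hv : v < M) :
    succIn Y v ∈ Y ∧ v < succIn Y v ∧ ∀ w ∈ Y, v < w → succIn Y v ≤ w := by
  classical
  have hne : (Y.filter (v < ·)).Nonempty := ⟨M, by simp [hM, hv]⟩
  obtain ⟨m, hm⟩ := Finset.min_of_nonempty hne
  have hp : succIn Y v = m := by simp [succIn, hm]; rfl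
  have hmem := Finset.mem_of_min hm
  simp only [Finset.mem_filter] at hmem
  refine ⟨hp ▸ hmem.1, hp ▸ hmem.2, ?_⟩
  intro w hw hwv
  have h := Finset.min_le (s := Y.filter (v < ·)) (Finset.mem_filter.mpr ⟨hw, hwv⟩)
  rw [hm] at h
  rw [hp]
  exact_mod_cast h

lemma phiAux_mem_cond (M : ℕ) :
    ∀ (l : List ℕ) (Y : Finset ℕ), l.Nodup →
    (∀ u ∈ l, 0 < u ∧ u < M) → (∀ u ∈ l, u ∈ Y) → 0 ∈ Y → M ∈ Y →
    ∀ a b : ℕ, (a, b) ∈ phiAux l Y →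
      a ∈ Y ∧ b ∈ Y ∧ a < b ∧
      ∀ w ∈ Y, a < w → w < b →
        w ∈ l ∧ (a ∈ l → l.idxOf w < l.idxOf a) ∧
          (b ∈ l → l.idxOf w < l.idxOf b) := by
  intro l
  induction l with
  | nil => intro Y _ _ _ _ _ a b hab; simp [phiAux] at hab
  | cons v rest ih =>
    intro Y hnd hrange hsub h0 hMY a b hab
    obtain ⟨hvrest, hndr⟩ := List.nodup_cons.mp hnd
    have hv := hrange v (List.mem_cons_self)
    have hvY := hsub v (List.mem_cons_self)
    obtain ⟨hpY, hpv, hpmax⟩ := predIn_spec (v := v) h0 hv.1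
    obtain ⟨hsY, hvs, hsmin⟩ := succIn_spec (M := M) hMY hv.2
    rcases rest with _ | ⟨u, rest'⟩
    · simp [phiAux] at hab
    · set rest := u :: rest' with hrest
      have hab' : (a, b) ∈ insert (predIn Y v, succIn Y v) (phiAux rest (Y.erase v)) := by
        simpa [phiAux] using hab
      rcases Finset.mem_insert.mp hab' with heq | hmem
      · -- the new diagonal (p, s)
        have ha : a = predIn Y v := by
          have := congrArg Prod.fst heq; simpa using this
        have hb : b = succIn Y v := by
          have := congrArg Prod.snd heq; simpa using this
        subst ha; subst hb
        refine ⟨hpY, hsY, lt_trans hpv hvs, ?_⟩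
        intro w hwY hw1 hw2
        have hwv : w = v := by
          by_contra hne
          rcases Nat.lt_or_ge w v with h | h
          · exact absurd (hpmax w hwY h) (by omega)
          · have : v < w := lt_of_le_of_ne h (Ne.symm hne)
            exact absurd (hsmin w hwY this) (by omega)
        subst hwv
        refine ⟨List.mem_cons_self, ?_, ?_⟩
        · intro hal
          rw [List.idxOf_cons_self]
          rw [List.idxOf_cons_ne _ (by omega : w ≠ predIn Y w)]
          omega
        · intro hbl
          rw [List.idxOf_cons_self]
          rw [List.idxOf_cons_ne _ (by omega : w ≠ succIn Y w)]
          omega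
      · have ih' := ih (Y.erase v) hndr (fun x hx => hrange x (List.mem_cons_of_mem _ hx))
          (fun x hx => Finset.mem_erase.mpr ⟨by rintro rfl; exact hvrest hx, hsub x (List.mem_cons_of_mem _ hx)⟩)
          (Finset.mem_erase.mpr ⟨by omega, h0⟩)
          (Finset.mem_erase.mpr ⟨by omega, hMY⟩) a b hmem
        obtain ⟨haY, hbY, hlt, hcond⟩ := ih'
        have hav : a ≠ v := (Finset.mem_erase.mp haY).1
        have hbv : b ≠ v := (Finset.mem_erase.mp hbY).1
        refine ⟨Finset.mem_of_mem_erase haY, Finset.mem_of_mem_erase hbY, hlt, ?_⟩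
        intro w hwY hw1 hw2
        by_cases hwv : w = v
        · subst hwv
          refine ⟨List.mem_cons_self, ?_, ?_⟩
          · intro _
            rw [List.idxOf_cons_self, List.idxOf_cons_ne _ (Ne.symm hav)]
            omega
          · intro _
            rw [List.idxOf_cons_self, List.idxOf_cons_ne _ (Ne.symm hbv)]
            omega
        · obtain ⟨hwl, hwa, hwb⟩ := hcond w (Finset.mem_erase.mpr ⟨hwv, hwY⟩) hw1 hw2
          refine ⟨List.mem_cons_of_mem _ hwl, ?_, ?_⟩
          · intro hal
            have hal' : a ∈ rest := by
              rcases List.mem_cons.mp hal with h | h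
              · exact absurd h hav
              · exact h
            rw [List.idxOf_cons_ne _ (Ne.symm hwv), List.idxOf_cons_ne _ (Ne.symm hav)]
            exact Nat.add_lt_add_right (hwa hal') 1
          · intro hbl
            have hbl' : b ∈ rest := by
              rcases List.mem_cons.mp hbl with h | h
              · exact absurd h hbv
              · exact h
            rw [List.idxOf_cons_ne _ (Ne.symm hwv), List.idxOf_cons_ne _ (Ne.symm hbv)]
            exact Nat.add_lt_add_right (hwb hbl') 1

/-- If the letters `x_i, x_{i+1}, …, x_j` (with `j ≥ i+2`) appear in increasing
order in `σ` read left to right, then `t_{j-1} ≤ t_{j-2} ≤ … ≤ t_i < x_i`. -/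
theorem stmt6 (n : ℕ) (l : List ℕ) (hl : l.Perm ((List.range n).map (· + 1)))
    (i j : ℕ) (hi1 : 1 ≤ i) (hij : i + 2 ≤ j) (hj : j ≤ n)
    (hinc : ∀ k, i ≤ k → k < j → l.idxOf k < l.idxOf (k + 1))
    (t : ℕ → ℕ)
    (htf : ∀ k, i ≤ k → k < j → FaceOnEdge n (phiT n l) k (t k)) :
    (∀ k, i ≤ k → k + 1 < j → t (k + 1) ≤ t k) ∧ t i < i := by
  have hmem : ∀ u, u ∈ l ↔ 0 < u ∧ u < n + 1 := by
    intro u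
    rw [hl.mem_iff, List.mem_map]
    constructor
    · rintro ⟨x, hx, rfl⟩; simp only [List.mem_range] at hx; omega
    · rintro ⟨h1, h2⟩; exact ⟨u - 1, by simp only [List.mem_range]; omega, by omega⟩
  have hnd : l.Nodup := hl.nodup_iff.mpr
    ((List.nodup_range (n := n)).map (fun a b h => by omega))
  -- key extraction from membership in phiT
  have key : ∀ a b : ℕ, (a, b) ∈ phiT n l → ∀ w, a < w → w < b →
      w ∈ l ∧ (a ∈ l → l.idxOf w < l.idxOf a) ∧ (b ∈ l → l.idxOf w < l.idxOf b) := by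
    intro a b hab w hw1 hw2
    have h := phiAux_mem_cond (n + 1) l (Finset.range (n + 2)) hnd
      (fun u hu => (hmem u).mp hu)
      (fun u hu => Finset.mem_range.mpr (by have := (hmem u).mp hu; omega))
      (Finset.mem_range.mpr (by omega)) (Finset.mem_range.mpr (by omega)) a b hab
    obtain ⟨_, hbY, _, hcond⟩ := h
    have hbn : b < n + 2 := Finset.mem_range.mp hbY
    exact hcond w (Finset.mem_range.mpr (by omega)) hw1 hw2
  -- normalized faces
  have hA : ∀ k, i ≤ k → k < j → t k < k ∧ IsFace n (phiT n l) (t k) k (k + 1) := by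
    intro k hik hkj
    rcases htf k hik hkj with ⟨h1, h2⟩ | ⟨h1, h2⟩
    · exact ⟨h1, h2⟩
    · exfalso
      obtain ⟨_, _, _, _, hedge⟩ := h2
      obtain ⟨_, _, hcase⟩ := hedge
      rcases hcase with h | h | h
      · omega
      · omega
      · have hc := (key k (t k) h (k + 1) (by omega) h1).2.1 ((hmem k).mpr (by omega))
        have := hinc k hik hkj
        omega
  refine ⟨?_, (hA i le_rfl (by omega)).1⟩
  intro k hik hkj
  obtain ⟨hu1, hf1⟩ := hA k hik (by omega)
  obtain ⟨hu2, hf2⟩ := hA (k + 1) (by omega) (by omega)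
  by_contra hcon
  push_neg at hcon
  -- t k < t (k+1) ≤ k
  have hk1l : k + 1 ∈ l := (hmem (k + 1)).mpr (by omega)
  have hkl : k ∈ l := (hmem k).mpr (by omega)
  have hidx := hinc k hik (by omega)
  by_cases hek : t (k + 1) = k
  · -- edge {k, k+2} ∈ D
    obtain ⟨_, _, _, _, hedge⟩ := hf2
    rw [hek] at hedge
    obtain ⟨_, _, hcase⟩ := hedge
    rcases hcase with h | h | h
    · omega
    · omega
    · have hc := (key k (k + 2) h (k + 1) (by omega) (by omega)).2.1 hkl
      omega
  · -- t k < t (k+1) < k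
    have hu2k : t (k + 1) < k := by omega
    -- edge {t k, k+1} ∈ D : from face (t k, k, k+1)
    have he1 : (t k, k + 1) ∈ phiT n l := by
      obtain ⟨_, _, _, _, hedge⟩ := hf1
      obtain ⟨_, _, hcase⟩ := hedge
      rcases hcase with h | h | h
      · omega
      · omega
      · exact h
    -- edge {t (k+1), k+2} ∈ D : from face (t (k+1), k+1, k+2)
    have he2 : (t (k + 1), k + 2) ∈ phiT n l := by
      obtain ⟨_, _, _, _, hedge⟩ := hf2
      obtain ⟨_, _, hcase⟩ := hedge
      rcases hcase with h | h | h
      · omega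
      · omega
      · exact h
    have hul : t (k + 1) ∈ l := (hmem (t (k + 1))).mpr (by omega)
    have hc1 := (key (t k) (k + 1) he1 (t (k + 1)) (by omega) (by omega)).2.2 hk1l
    have hc2 := (key (t (k + 1)) (k + 2) he2 (k + 1) (by omega) (by omega)).2.1 hul
    omega
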